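/- arXiv:1507.01431 — 2 statements merged into one kernel-verified Lean document; each statement's English description precedes it below -/
import Mathlib

section
/- For every 2-homogeneous polynomial P(x,y) = a·x² + b·xy + c·y² with real coefficients, |a| + |b| + |c| ≤ (1 + √2) · ‖P‖_∞, where ‖P‖_∞ = sup{|P(x,y)| : |x| ≤ 1, |y| ≤ 1}. The constant 1 + √2 is optimal, attained by P(x,y) = ((2+√2)/4)x² − ((2+√2)/4)y² + (√2/2)xy. -/
/-- Sup norm of `a·x² + b·xy + c·y²` over the unit ball of `ℓ∞²`. -/
noncomputable def supNormInf (a b c : ℝ) : ℝ :=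
  sSup {z : ℝ | ∃ x y : ℝ, |x| ≤ 1 ∧ |y| ≤ 1 ∧ z = |a * x ^ 2 + b * x * y + c * y ^ 2|}

private lemma supNorm_bdd (a b c : ℝ) :
    BddAbove {z : ℝ | ∃ x y : ℝ, |x| ≤ 1 ∧ |y| ≤ 1 ∧ z = |a * x ^ 2 + b * x * y + c * y ^ 2|} := by
  refine ⟨|a| + |b| + |c|, ?_⟩
  rintro z ⟨x, y, hx, hy, rfl⟩
  have hx0 := abs_nonneg x
  have hy0 := abs_nonneg y
  have hx2 : |x| ^ 2 ≤ 1 := by nlinarith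
  have hy2 : |y| ^ 2 ≤ 1 := by nlinarith
  have hxy : |x| * |y| ≤ 1 := by nlinarith
  have h1 : |a * x ^ 2| ≤ |a| := by
    rw [abs_mul, abs_pow]; exact mul_le_of_le_one_right (abs_nonneg a) hx2
  have h2 : |b * x * y| ≤ |b| := by
    rw [abs_mul, abs_mul, mul_assoc]; exact mul_le_of_le_one_right (abs_nonneg b) hxy
  have h3 : |c * y ^ 2| ≤ |c| := by
    rw [abs_mul, abs_pow]; exact mul_le_of_le_one_right (abs_nonneg c) hy2
  calc |a * x ^ 2 + b * x * y + c * y ^ 2|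
      ≤ |a * x ^ 2 + b * x * y| + |c * y ^ 2| := abs_add_le _ _
    _ ≤ |a * x ^ 2| + |b * x * y| + |c * y ^ 2| := by linarith [abs_add_le (a * x ^ 2) (b * x * y)]
    _ ≤ |a| + |b| + |c| := by linarith

private lemma eval_le (a b c : ℝ) {x y : ℝ} (hx : |x| ≤ 1) (hy : |y| ≤ 1) :
    |a * x ^ 2 + b * x * y + c * y ^ 2| ≤ supNormInf a b c :=
  le_csSup (supNorm_bdd a b c) ⟨x, y, hx, hy, rfl⟩

set_option maxHeartbeats 1000000 in
private lemma part1 (a b c : ℝ) :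
    |a| + |b| + |c| ≤ (1 + Real.sqrt 2) * supNormInf a b c := by
  set s := Real.sqrt 2 with hsdef
  have hs : s * s = 2 := Real.mul_self_sqrt (by norm_num)
  have hs0 : 0 ≤ s := Real.sqrt_nonneg 2
  have hs1 : 1 ≤ s := by nlinarith
  have hs2 : s ≤ 2 := by nlinarith
  set S := supNormInf a b c with hSdef
  have h1 : (|(1 : ℝ)| : ℝ) ≤ 1 := by norm_num
  have hm1 : (|(-1 : ℝ)| : ℝ) ≤ 1 := by norm_num
  have ht : |s - 1| ≤ 1 := by rw [abs_le]; constructor <;> linarith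
  have hmt : |(-(s - 1))| ≤ 1 := by rwa [abs_neg]
  have e1 := eval_le a b c h1 h1
  have e2 := eval_le a b c h1 hm1
  have e3 := eval_le a b c h1 ht
  have e4 := eval_le a b c ht hm1
  have e5 := eval_le a b c h1 hmt
  have e6 := eval_le a b c ht h1
  have hS0 : 0 ≤ S := le_trans (abs_nonneg _) e1
  have E1 : |a + b + c| ≤ S := by
    rw [show a * 1 ^ 2 + b * 1 * 1 + c * 1 ^ 2 = a + b + c from by ring] at e1; exact e1
  have E2 : |a - b + c| ≤ S := by
    rw [show a * 1 ^ 2 + b * 1 * (-1) + c * (-1) ^ 2 = a - b + c from by ring] at e2; exact e2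
  -- key identities
  have id34 : (a * 1 ^ 2 + b * 1 * (s - 1) + c * (s - 1) ^ 2)
      - (a * (s - 1) ^ 2 + b * (s - 1) * (-1) + c * (-1) ^ 2)
      = 2 * (s - 1) * (a + b - c) := by linear_combination (c - a) * hs
  have id56 : (a * 1 ^ 2 + b * 1 * (-(s - 1)) + c * (-(s - 1)) ^ 2)
      - (a * (s - 1) ^ 2 + b * (s - 1) * 1 + c * 1 ^ 2)
      = 2 * (s - 1) * (a - b - c) := by linear_combination (c - a) * hs
  have K3 : 2 * (s - 1) * |a + b - c| ≤ 2 * S := by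
    calc 2 * (s - 1) * |a + b - c| = |2 * (s - 1) * (a + b - c)| := by
          rw [abs_mul, abs_of_nonneg (show (0:ℝ) ≤ 2 * (s - 1) by linarith)]
      _ = |(a * 1 ^ 2 + b * 1 * (s - 1) + c * (s - 1) ^ 2)
            - (a * (s - 1) ^ 2 + b * (s - 1) * (-1) + c * (-1) ^ 2)| := by rw [id34]
      _ ≤ |a * 1 ^ 2 + b * 1 * (s - 1) + c * (s - 1) ^ 2|
            + |a * (s - 1) ^ 2 + b * (s - 1) * (-1) + c * (-1) ^ 2| := abs_sub _ _
      _ ≤ 2 * S := by linarith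
  have K4 : 2 * (s - 1) * |a - b - c| ≤ 2 * S := by
    calc 2 * (s - 1) * |a - b - c| = |2 * (s - 1) * (a - b - c)| := by
          rw [abs_mul, abs_of_nonneg (show (0:ℝ) ≤ 2 * (s - 1) by linarith)]
      _ = |(a * 1 ^ 2 + b * 1 * (-(s - 1)) + c * (-(s - 1)) ^ 2)
            - (a * (s - 1) ^ 2 + b * (s - 1) * 1 + c * 1 ^ 2)| := by rw [id56]
      _ ≤ |a * 1 ^ 2 + b * 1 * (-(s - 1)) + c * (-(s - 1)) ^ 2|
            + |a * (s - 1) ^ 2 + b * (s - 1) * 1 + c * 1 ^ 2| := abs_sub _ _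
      _ ≤ 2 * S := by linarith
  have K3' : |a + b - c| ≤ (1 + s) * S := by
    have h := mul_le_mul_of_nonneg_left K3 (show (0:ℝ) ≤ (1 + s) / 2 by linarith)
    have hz : (1 + s) / 2 * (2 * (s - 1) * |a + b - c|) = |a + b - c| := by
      linear_combination |a + b - c| * hs
    rw [hz] at h
    linarith [h]
  have K4' : |a - b - c| ≤ (1 + s) * S := by
    have h := mul_le_mul_of_nonneg_left K4 (show (0:ℝ) ≤ (1 + s) / 2 by linarith)
    have hz : (1 + s) / 2 * (2 * (s - 1) * |a - b - c|) = |a - b - c| := by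
      linear_combination |a - b - c| * hs
    rw [hz] at h
    linarith [h]
  obtain ⟨B1l, B1r⟩ := abs_le.mp E1
  obtain ⟨B2l, B2r⟩ := abs_le.mp E2
  obtain ⟨B3l, B3r⟩ := abs_le.mp K3'
  obtain ⟨B4l, B4r⟩ := abs_le.mp K4'
  rcases abs_cases a with ⟨ha, _⟩ | ⟨ha, _⟩ <;>
    rcases abs_cases b with ⟨hb, _⟩ | ⟨hb, _⟩ <;>
      rcases abs_cases c with ⟨hc, _⟩ | ⟨hc, _⟩ <;>
        rw [ha, hb, hc] <;>
          linarith [mul_nonneg hs0 hS0, hS0]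

private lemma part2 :
    supNormInf ((2 + Real.sqrt 2) / 4) (Real.sqrt 2 / 2) (-((2 + Real.sqrt 2) / 4)) = 1 := by
  set s := Real.sqrt 2 with hsdef
  have hs : s * s = 2 := Real.mul_self_sqrt (by norm_num)
  have hs0 : 0 ≤ s := Real.sqrt_nonneg 2
  have hs1 : 1 ≤ s := by nlinarith
  have hs2 : s ≤ 2 := by nlinarith
  set u := Real.sqrt (2 - s) with hudef
  set v := Real.sqrt (2 + s) with hvdef
  have hu : u * u = 2 - s := Real.mul_self_sqrt (by linarith)
  have hv : v * v = 2 + s := Real.mul_self_sqrt (by linarith)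
  have huv : u * v = s := by
    rw [hudef, hvdef, ← Real.sqrt_mul (by linarith : (0:ℝ) ≤ 2 - s)]
    rw [show (2 - s) * (2 + s) = 2 from by linear_combination (-1 : ℝ) * hs]
  apply le_antisymm
  · apply csSup_le
    · exact ⟨_, 0, 0, by norm_num, by norm_num, rfl⟩
    · rintro z ⟨x, y, hx, hy, rfl⟩
      obtain ⟨hxl, hxr⟩ := abs_le.mp hx
      obtain ⟨hyl, hyr⟩ := abs_le.mp hy
      have hx2 : x ^ 2 ≤ 1 := by nlinarith
      have hy2 : y ^ 2 ≤ 1 := by nlinarith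
      have p1 : (0:ℝ) ≤ (2 - s) * x ^ 2 - 2 * s * (x * y) + (2 + s) * y ^ 2 := by
        have e : (u * x - v * y) ^ 2 = (2 - s) * x ^ 2 - 2 * s * (x * y) + (2 + s) * y ^ 2 := by
          linear_combination x ^ 2 * hu - 2 * (x * y) * huv + y ^ 2 * hv
        rw [← e]; exact sq_nonneg _
      have p2 : (0:ℝ) ≤ (2 + s) * x ^ 2 + 2 * s * (x * y) + (2 - s) * y ^ 2 := by
        have e : (v * x + u * y) ^ 2 = (2 + s) * x ^ 2 + 2 * s * (x * y) + (2 - s) * y ^ 2 := by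
          linear_combination x ^ 2 * hv + 2 * (x * y) * huv + y ^ 2 * hu
        rw [← e]; exact sq_nonneg _
      rw [abs_le]
      constructor
      · nlinarith [p2, hy2]
      · nlinarith [p1, hx2]
  · apply le_csSup (supNorm_bdd _ _ _)
    refine ⟨1, s - 1, by norm_num, by rw [abs_le]; constructor <;> linarith, ?_⟩
    have hval : (2 + s) / 4 * 1 ^ 2 + s / 2 * 1 * (s - 1) + -((2 + s) / 4) * (s - 1) ^ 2 = 1 := by
      linear_combination ((2 - s) / 4) * hs
    rw [hval, abs_one]

theorem stmt4 :
    (∀ a b c : ℝ, |a| + |b| + |c| ≤ (1 + Real.sqrt 2) * supNormInf a b c) ∧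
    |((2 + Real.sqrt 2) / 4)| + |(Real.sqrt 2 / 2)| + |(-((2 + Real.sqrt 2) / 4))| =
      (1 + Real.sqrt 2) *
        supNormInf ((2 + Real.sqrt 2) / 4) (Real.sqrt 2 / 2) (-((2 + Real.sqrt 2) / 4)) := by
  constructor
  · exact part1
  · have hs0 : 0 ≤ Real.sqrt 2 := Real.sqrt_nonneg 2
    rw [part2, mul_one, abs_neg,
      abs_of_nonneg (by linarith : (0:ℝ) ≤ (2 + Real.sqrt 2) / 4),
      abs_of_nonneg (by linarith : (0:ℝ) ≤ Real.sqrt 2 / 2)]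
    ring
end

section
/- For every 2-homogeneous polynomial P(x,y) = a·x² + b·xy + c·y² with real coefficients and every q ≥ 2, (|a|^q + |b|^q + |c|^q)^{1/q} ≤ 4 · ‖P‖_1, where ‖P‖_1 = sup{|P(x,y)| : |x| + |y| ≤ 1}, and the constant 4 is optimal (attained by P(x,y) = 4xy). -/
/-- Sup norm of `a·x² + b·xy + c·y²` over the unit ball of `ℓ₁²`. -/
noncomputable def supNormOne (a b c : ℝ) : ℝ :=
  sSup {z : ℝ | ∃ x y : ℝ, |x| + |y| ≤ 1 ∧ z = |a * x ^ 2 + b * x * y + c * y ^ 2|}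

lemma supNormOne_bdd (a b c : ℝ) :
    BddAbove {z : ℝ | ∃ x y : ℝ, |x| + |y| ≤ 1 ∧ z = |a * x ^ 2 + b * x * y + c * y ^ 2|} := by
  refine ⟨|a| + |b| + |c|, ?_⟩
  rintro z ⟨x, y, hxy, rfl⟩
  have hx : |x| ≤ 1 := by have := abs_nonneg y; linarith
  have hy : |y| ≤ 1 := by have := abs_nonneg x; linarith
  have h1 : |a * x ^ 2 + b * x * y + c * y ^ 2| ≤ |a| * |x|^2 + |b| * (|x| * |y|) + |c| * |y|^2 := by
    calc |a * x ^ 2 + b * x * y + c * y ^ 2|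
        ≤ |a * x ^ 2 + b * x * y| + |c * y ^ 2| := abs_add_le _ _
      _ ≤ |a * x ^ 2| + |b * x * y| + |c * y ^ 2| := by
          have := abs_add_le (a * x ^ 2) (b * x * y); linarith
      _ = |a| * |x|^2 + |b| * (|x| * |y|) + |c| * |y|^2 := by
          rw [abs_mul, abs_mul, abs_mul, abs_mul, abs_pow, abs_pow]; ring
  have hax := abs_nonneg a
  have hbx := abs_nonneg b
  have hcx := abs_nonneg c
  have hx0 := abs_nonneg x
  have hy0 := abs_nonneg y
  have e1 : |x|^2 ≤ 1 := by nlinarith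
  have e2 : |y|^2 ≤ 1 := by nlinarith
  have e3 : |x| * |y| ≤ 1 := by nlinarith
  nlinarith [mul_le_mul_of_nonneg_left e1 hax, mul_le_mul_of_nonneg_left e2 hcx,
    mul_le_mul_of_nonneg_left e3 hbx]

lemma supNormOne_ge (a b c x y : ℝ) (h : |x| + |y| ≤ 1) :
    |a * x ^ 2 + b * x * y + c * y ^ 2| ≤ supNormOne a b c :=
  le_csSup (supNormOne_bdd a b c) ⟨x, y, h, rfl⟩

lemma half_abs : |(1:ℝ)/2| + |(1:ℝ)/2| ≤ 1 := by
  rw [abs_of_nonneg (by norm_num : (0:ℝ) ≤ 1/2)]; norm_num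

lemma half_abs' : |(1:ℝ)/2| + |-((1:ℝ)/2)| ≤ 1 := by
  rw [abs_neg, abs_of_nonneg (by norm_num : (0:ℝ) ≤ 1/2)]; norm_num

set_option maxHeartbeats 1000000 in
lemma key_sq (a b c : ℝ) : a^2 + b^2 + c^2 ≤ 16 * (supNormOne a b c)^2 := by
  obtain ⟨S, hS⟩ : ∃ S, S = supNormOne a b c := ⟨_, rfl⟩
  rw [← hS]
  have h1 : |a| ≤ S := by
    have := supNormOne_ge a b c 1 0 (by norm_num)
    rw [← hS] at this; simpa using this
  have h2 : |c| ≤ S := by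
    have := supNormOne_ge a b c 0 1 (by norm_num)
    rw [← hS] at this; simpa using this
  have h3 : |(a + b + c)/4| ≤ S := by
    have := supNormOne_ge a b c (1/2) (1/2) half_abs
    have e : a * (1/2 : ℝ) ^ 2 + b * (1/2) * (1/2) + c * (1/2) ^ 2 = (a + b + c)/4 := by ring
    rw [← hS] at this; rwa [e] at this
  have h4 : |(a - b + c)/4| ≤ S := by
    have := supNormOne_ge a b c (1/2) (-(1/2)) half_abs'
    have e : a * (1/2 : ℝ) ^ 2 + b * (1/2) * (-(1/2)) + c * (-(1/2)) ^ 2 = (a - b + c)/4 := by ring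
    rw [← hS] at this; rwa [e] at this
  have hS0 : 0 ≤ S := le_trans (abs_nonneg a) h1
  rw [abs_le] at h1 h2 h3 h4
  by_cases hd : |a - c| ≤ |b|
  · by_cases hb : b = 0
    · subst hb
      have hac : a = c := by
        have h0 : |a - c| ≤ 0 := by simpa using hd
        have := abs_nonpos_iff.mp h0
        linarith [sub_eq_zero.mp this]
      nlinarith [h1.1, h1.2, h2.1, h2.2]
    · -- main case: b ≠ 0, |a - c| ≤ |b|
      have hbpos : 0 < |b| := abs_pos.mpr hb
      obtain ⟨t, ht⟩ : ∃ t : ℝ, t = 1/2 + (a - c)/(2*b) := ⟨_, rfl⟩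
      have hu : |(a - c)/(2*b)| ≤ 1/2 := by
        rw [abs_div, abs_mul, abs_two, div_le_iff₀ (by positivity)]
        linarith
      have hu' := abs_le.mp hu
      have ht0 : 0 ≤ t := by rw [ht]; linarith [hu'.1]
      have ht1 : t ≤ 1 := by rw [ht]; linarith [hu'.2]
      have h5 := supNormOne_ge a b c t (1 - t)
        (by rw [abs_of_nonneg ht0, abs_of_nonneg (by linarith : (0:ℝ) ≤ 1 - t)]; linarith)
      have h6 := supNormOne_ge a b c (1 - t) (-t)
        (by rw [abs_of_nonneg (by linarith : (0:ℝ) ≤ 1 - t), abs_neg, abs_of_nonneg ht0]; linarith)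
      rw [← hS] at h5 h6
      rw [abs_le] at h5 h6
      have heq : (a * t ^ 2 + b * t * (1 - t) + c * (1 - t) ^ 2)
          - (a * (1 - t) ^ 2 + b * (1 - t) * (-t) + c * (-t) ^ 2)
          = b/2 + (a - c)^2/(2*b) := by
        rw [ht]; field_simp; ring
      rcases lt_or_gt_of_ne hb with hbneg | hbpos'
      · -- b < 0
        have h7 : -(b/2 + (a - c)^2/(2*b)) ≤ 2*S := by
          have := h5.1; have := h6.2; linarith [heq]
        have h8 : b^2 + (a - c)^2 ≤ -(4*b)*S := by
          have hpos : (0:ℝ) < -(2*b) := by linarith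
          have h9 : (b^2 + (a - c)^2)/(-(2*b)) ≤ 2*S := by
            have e : (b^2 + (a - c)^2)/(-(2*b)) = -(b/2 + (a - c)^2/(2*b)) := by
              field_simp
            rw [e]; exact h7
          have := (div_le_iff₀ hpos).mp h9
          linarith
        clear h5 h6 h7 heq hu hu' ht0 ht1 ht
        nlinarith [mul_nonneg (by linarith [h3.2] : (0:ℝ) ≤ S - (a+b+c)/4)
            (by linarith [h3.1] : (0:ℝ) ≤ S + (a+b+c)/4),
          mul_nonneg (by linarith [h4.2] : (0:ℝ) ≤ S - (a-b+c)/4)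
            (by linarith [h4.1] : (0:ℝ) ≤ S + (a-b+c)/4),
          mul_nonneg hS0 (by nlinarith : (0:ℝ) ≤ 4*S + b), sq_nonneg (a - c), sq_nonneg (a + c)]
      · -- b > 0
        have h7 : b/2 + (a - c)^2/(2*b) ≤ 2*S := by
          have := h5.2; have := h6.1; linarith [heq]
        have h8 : b^2 + (a - c)^2 ≤ 4*b*S := by
          have hpos : (0:ℝ) < 2*b := by linarith
          have h9 : (b^2 + (a - c)^2)/(2*b) ≤ 2*S := by
            have e : (b^2 + (a - c)^2)/(2*b) = b/2 + (a - c)^2/(2*b) := by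
              field_simp
            rw [e]; exact h7
          have := (div_le_iff₀ hpos).mp h9
          linarith
        clear h5 h6 h7 heq hu hu' ht0 ht1 ht
        nlinarith [mul_nonneg (by linarith [h3.2] : (0:ℝ) ≤ S - (a+b+c)/4)
            (by linarith [h3.1] : (0:ℝ) ≤ S + (a+b+c)/4),
          mul_nonneg (by linarith [h4.2] : (0:ℝ) ≤ S - (a-b+c)/4)
            (by linarith [h4.1] : (0:ℝ) ≤ S + (a-b+c)/4),
          mul_nonneg hS0 (by nlinarith : (0:ℝ) ≤ 4*S - b), sq_nonneg (a - c), sq_nonneg (a + c)]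
  · -- |b| < |a - c| ≤ |a| + |c| ≤ 2S
    push_neg at hd
    have hb2 : b^2 ≤ (a - c)^2 := by
      have h := le_of_lt hd
      calc b^2 = |b|^2 := (sq_abs b).symm
        _ ≤ |a - c|^2 := by nlinarith [abs_nonneg b]
        _ = (a - c)^2 := sq_abs _
    nlinarith [h1.1, h1.2, h2.1, h2.2, sq_nonneg (a - c), sq_nonneg (a + c)]

lemma rpow_helper (q : ℝ) (hq : 2 ≤ q) (x B : ℝ) (hx : 0 ≤ x) (hB : 0 < B) (hxB : x ≤ B) :
    x ^ q ≤ x ^ 2 * B ^ (q - 2) := by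
  rcases eq_or_lt_of_le hx with h0 | hxpos
  · rw [← h0, Real.zero_rpow (by positivity : q ≠ 0)]
    positivity
  · have e : x ^ q = x ^ (2:ℝ) * x ^ (q - 2) := by
      rw [← Real.rpow_add hxpos]; norm_num
    rw [e, Real.rpow_two]
    exact mul_le_mul_of_nonneg_left
      (Real.rpow_le_rpow (le_of_lt hxpos) hxB (by linarith)) (sq_nonneg x)

set_option maxHeartbeats 1000000 in
theorem stmt7 (q : ℝ) (hq : 2 ≤ q) :
    (∀ a b c : ℝ,
      (|a| ^ q + |b| ^ q + |c| ^ q) ^ (1 / q) ≤ 4 * supNormOne a b c) ∧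
    (|(0 : ℝ)| ^ q + |(4 : ℝ)| ^ q + |(0 : ℝ)| ^ q) ^ (1 / q) = 4 * supNormOne 0 4 0 := by
  have hq0 : (0:ℝ) < q := by linarith
  have hqne : q ≠ 0 := ne_of_gt hq0
  constructor
  · intro a b c
    obtain ⟨S, hSdef⟩ : ∃ S, S = supNormOne a b c := ⟨_, rfl⟩
    rw [← hSdef]
    have hkey : a^2 + b^2 + c^2 ≤ 16 * S^2 := by rw [hSdef]; exact key_sq a b c
    have h1 : |a| ≤ S := by
      have := supNormOne_ge a b c 1 0 (by norm_num); rw [← hSdef] at this; simpa using this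
    have h2 : |c| ≤ S := by
      have := supNormOne_ge a b c 0 1 (by norm_num); rw [← hSdef] at this; simpa using this
    have hS0 : 0 ≤ S := le_trans (abs_nonneg a) h1
    rcases eq_or_lt_of_le hS0 with hS0' | hSpos
    · -- S = 0, so a = b = c = 0
      have hz : a^2 + b^2 + c^2 ≤ 0 := by nlinarith
      have ha : a = 0 := by
        have : a^2 = 0 := le_antisymm (by nlinarith [sq_nonneg b, sq_nonneg c]) (sq_nonneg a)
        exact pow_eq_zero_iff (by norm_num) |>.mp this
      have hb : b = 0 := by
        have : b^2 = 0 := le_antisymm (by nlinarith [sq_nonneg a, sq_nonneg c]) (sq_nonneg b)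
        exact pow_eq_zero_iff (by norm_num) |>.mp this
      have hc : c = 0 := by
        have : c^2 = 0 := le_antisymm (by nlinarith [sq_nonneg a, sq_nonneg b]) (sq_nonneg c)
        exact pow_eq_zero_iff (by norm_num) |>.mp this
      simp only [ha, hb, hc, abs_zero, Real.zero_rpow hqne, add_zero, zero_add]
      rw [Real.zero_rpow (by positivity : 1/q ≠ 0)]
      linarith
    · -- S > 0
      have hB : (0:ℝ) < 4*S := by linarith
      have haB : |a| ≤ 4*S := by linarith
      have hcB : |c| ≤ 4*S := by linarith
      have hbB : |b| ≤ 4*S := by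
        have hb2 : |b|^2 ≤ (4*S)^2 := by rw [sq_abs]; nlinarith [sq_nonneg a, sq_nonneg c]
        nlinarith [abs_nonneg b]
      have hsum : |a| ^ q + |b| ^ q + |c| ^ q ≤ (4*S) ^ q := by
        have ha := rpow_helper q hq |a| (4*S) (abs_nonneg a) hB haB
        have hb := rpow_helper q hq |b| (4*S) (abs_nonneg b) hB hbB
        have hc := rpow_helper q hq |c| (4*S) (abs_nonneg c) hB hcB
        have e : (4*S) ^ q = (4*S) ^ (2:ℝ) * (4*S) ^ (q - 2) := by
          rw [← Real.rpow_add hB]; norm_num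
        rw [e, Real.rpow_two]
        have hpow : (0:ℝ) ≤ (4*S) ^ (q - 2) := Real.rpow_nonneg (le_of_lt hB) _
        have hsq : |a|^2 + |b|^2 + |c|^2 ≤ (4*S)^2 := by
          rw [sq_abs, sq_abs, sq_abs]; nlinarith
        nlinarith [mul_le_mul_of_nonneg_right hsq hpow]
      calc (|a| ^ q + |b| ^ q + |c| ^ q) ^ (1 / q)
          ≤ ((4*S) ^ q) ^ (1 / q) := by
            apply Real.rpow_le_rpow _ hsum (by positivity)
            positivity
        _ = 4*S := by
            rw [← Real.rpow_mul (le_of_lt hB), mul_one_div_cancel hqne, Real.rpow_one]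
  · -- sharpness: supNormOne 0 4 0 = 1
    have hsup : supNormOne 0 4 0 = 1 := by
      apply IsGreatest.csSup_eq
      constructor
      · refine ⟨1/2, 1/2, half_abs, ?_⟩
        norm_num
      · rintro z ⟨x, y, hxy, rfl⟩
        have e : (0:ℝ) * x ^ 2 + 4 * x * y + 0 * y ^ 2 = 4 * (x * y) := by ring
        rw [e, abs_mul, abs_mul]
        have hx0 := abs_nonneg x
        have hy0 := abs_nonneg y
        have h4 : |(4:ℝ)| = 4 := by norm_num
        rw [h4]
        nlinarith [sq_nonneg (|x| - |y|)]
    rw [hsup, abs_zero, Real.zero_rpow hqne]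
    have h4 : |(4:ℝ)| = 4 := by norm_num
    rw [h4, zero_add, add_zero, ← Real.rpow_mul (by norm_num : (0:ℝ) ≤ 4),
      mul_one_div_cancel hqne, Real.rpow_one]
    norm_num
end
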